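/- Let θ_n = 2π(n/5 + 1/20) for n ∈ {0,1,2,3,4}, and set x_n = sin θ_n, y_n = cos θ_n. Then the determinant of the 4×4 matrix with rows (x_1, y_1, x_1 + y_1 − 1, 1), (x_2, y_2, −x_2 + y_2 + 1, 1), (x_0, y_0, x_0 − y_0 + 1, 1), (x_3, y_3, −x_3 − y_3 − 1, 1) equals (1/4)(5√5 − 2√(5(2√5 + 5)) + 5), which is strictly positive. -/

import Mathlib

private lemma det_fin_four_expand (a b c d e f g h i j k l m n o p : ℝ) :
    Matrix.det !![a,b,c,d; e,f,g,h; i,j,k,l; m,n,o,p] =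
      a*(f*(k*p-l*o) - g*(j*p-l*n) + h*(j*o-k*n))
      - b*(e*(k*p-l*o) - g*(i*p-l*m) + h*(i*o-k*m))
      + c*(e*(j*p-l*n) - f*(i*p-l*m) + h*(i*n-j*m))
      - d*(e*(j*o-k*n) - f*(i*o-k*m) + g*(i*n-j*m)) := by
  rw [Matrix.det_succ_row_zero]
  simp [Fin.sum_univ_succ, Matrix.det_fin_three, Fin.succAbove,
    show (Fin.castSucc 2 : Fin 4) = 2 from rfl, show (Fin.castSucc 1 : Fin 4) = 1 from rfl,
    show (Fin.castSucc 0 : Fin 4) = 0 from rfl]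
  ring

/-- The value `V_β` for the case `(a, γ, β, b) = (1, 2, 0, 3)` of the pentagon
construction equals `(1/4)(5√5 − 2√(5(2√5 + 5)) + 5) > 0`. -/
theorem pentagon_Vbeta_first_case
    (θ x y : ℕ → ℝ)
    (hθ : ∀ n, θ n = 2 * Real.pi * ((n : ℝ) / 5 + 1 / 20))
    (hx : ∀ n, x n = Real.sin (θ n))
    (hy : ∀ n, y n = Real.cos (θ n)) :
    Matrix.det !![x 1, y 1, x 1 + y 1 - 1, 1;
                  x 2, y 2, -x 2 + y 2 + 1, 1;
                  x 0, y 0, x 0 - y 0 + 1, 1;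
                  x 3, y 3, -x 3 - y 3 - 1, 1]
      = 1 / 4 * (5 * Real.sqrt 5 - 2 * Real.sqrt (5 * (2 * Real.sqrt 5 + 5)) + 5) ∧
    0 < 1 / 4 * (5 * Real.sqrt 5 - 2 * Real.sqrt (5 * (2 * Real.sqrt 5 + 5)) + 5) := by
  have pi_pos := Real.pi_pos
  set r := Real.sqrt 5 with hr_def
  have hr : r ^ 2 = 5 := Real.sq_sqrt (by norm_num)
  have hrnn : 0 ≤ r := Real.sqrt_nonneg 5
  have hr1 : 1 ≤ r := by nlinarith
  set s := Real.sin (Real.pi / 10) with hs_def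
  set c := Real.cos (Real.pi / 10) with hc_def
  have hsnn : 0 ≤ s := Real.sin_nonneg_of_nonneg_of_le_pi (by positivity) (by linarith)
  have hcpos : 0 < c := Real.cos_pos_of_mem_Ioo ⟨by linarith, by linarith⟩
  -- value of s
  have hcos5 : Real.cos (Real.pi / 5) = (1 + r) / 4 := Real.cos_pi_div_five
  have hdouble : Real.cos (Real.pi / 5) = 1 - 2 * s ^ 2 := by
    have h : Real.pi / 5 = 2 * (Real.pi / 10) := by ring
    rw [h, Real.cos_two_mul, Real.cos_sq']
    ring
  have hs2 : s ^ 2 = (3 - r) / 8 := by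
    rw [hdouble] at hcos5; linarith
  have hs_val : s = (r - 1) / 4 := by
    have h1 : s = Real.sqrt (s ^ 2) := (Real.sqrt_sq hsnn).symm
    rw [h1, hs2, show (3 - r) / 8 = ((r - 1) / 4) ^ 2 by linear_combination (-1/16) * hr]
    exact Real.sqrt_sq (by linarith)
  have hc_sq : c ^ 2 = (5 + r) / 8 := by
    have := Real.sin_sq_add_cos_sq (Real.pi / 10)
    rw [← hs_def, ← hc_def] at this
    nlinarith [hs2]
  -- the auxiliary sqrt
  have hT : Real.sqrt (5 * (2 * r + 5)) = (5 + r) * c := by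
    rw [show 5 * (2 * r + 5) = ((5 + r) * c) ^ 2 by
      linear_combination (-(5 + r) ^ 2) * hc_sq + (-(15 + r) / 8) * hr]
    exact Real.sqrt_sq (by positivity)
  -- matrix entries
  have hx1 : x 1 = 1 := by
    rw [hx, hθ, show 2 * Real.pi * ((1 : ℕ) / 5 + 1 / 20) = Real.pi / 2 by push_cast; ring,
      Real.sin_pi_div_two]
  have hy1 : y 1 = 0 := by
    rw [hy, hθ, show 2 * Real.pi * ((1 : ℕ) / 5 + 1 / 20) = Real.pi / 2 by push_cast; ring,
      Real.cos_pi_div_two]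
  have hx0 : x 0 = s := by
    rw [hx, hθ, show 2 * Real.pi * ((0 : ℕ) / 5 + 1 / 20) = Real.pi / 10 by push_cast; ring]
  have hy0 : y 0 = c := by
    rw [hy, hθ, show 2 * Real.pi * ((0 : ℕ) / 5 + 1 / 20) = Real.pi / 10 by push_cast; ring]
  have hx2 : x 2 = s := by
    rw [hx, hθ, show 2 * Real.pi * ((2 : ℕ) / 5 + 1 / 20) = Real.pi - Real.pi / 10 by
      push_cast; ring, Real.sin_pi_sub]
  have hy2 : y 2 = -c := by
    rw [hy, hθ, show 2 * Real.pi * ((2 : ℕ) / 5 + 1 / 20) = Real.pi - Real.pi / 10 by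
      push_cast; ring, Real.cos_pi_sub]
  have hx3 : x 3 = -(1 - 2 * s ^ 2) := by
    rw [hx, hθ, show 2 * Real.pi * ((3 : ℕ) / 5 + 1 / 20)
        = Real.pi - (-(3 * Real.pi / 10)) by push_cast; ring,
      Real.sin_pi_sub, Real.sin_neg,
      show 3 * Real.pi / 10 = Real.pi / 2 - Real.pi / 5 by ring,
      Real.sin_pi_div_two_sub, hdouble]
  have hy3 : y 3 = -(2 * s * c) := by
    rw [hy, hθ, show 2 * Real.pi * ((3 : ℕ) / 5 + 1 / 20)
        = Real.pi - (-(3 * Real.pi / 10)) by push_cast; ring,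
      Real.cos_pi_sub, Real.cos_neg,
      show 3 * Real.pi / 10 = Real.pi / 2 - Real.pi / 5 by ring,
      Real.cos_pi_div_two_sub,
      show Real.pi / 5 = 2 * (Real.pi / 10) by ring, Real.sin_two_mul]
  constructor
  · rw [det_fin_four_expand]
    rw [hx0, hy0, hx1, hy1, hx2, hy2, hx3, hy3, hT, hs_val]
    linear_combination ((5 + 4 * r - r ^ 2) / 2) * hc_sq + (c / 4 - (r + 1) / 16) * hr
  · rw [hT]
    nlinarith [hc_sq, mul_pos (show (0:ℝ) < 5 + r by linarith) hcpos]
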